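/- For every n^d × n^d matrix M and every κ ⊆ [d], rank(M^{⊤_κ}) ≤ n^{2·min{|κ|, d−|κ|}} · rank(M). -/

import Mathlib

open Matrix BigOperators

/-- The `κ`-partial transpose of an `n^d × n^d` matrix (indexed by tuples in `[n]^d`). -/
def ptrans {F : Type*} [Field F] {n d : ℕ} (κ : Finset (Fin d))
    (M : Matrix (Fin d → Fin n) (Fin d → Fin n) F) :
    Matrix (Fin d → Fin n) (Fin d → Fin n) F :=
  fun i j => M (fun k => if k ∈ κ then j k else i k) (fun k => if k ∈ κ then i k else j k)

section aux

variable {F : Type*} [Field F] {n d : ℕ}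

/-- rank of a sum of matrices is at most the sum of the ranks. -/
lemma myRankAddLe (A B : Matrix (Fin d → Fin n) (Fin d → Fin n) F) :
    (A + B).rank ≤ A.rank + B.rank := by
  classical
  have hle : LinearMap.range (A + B).mulVecLin ≤
      LinearMap.range A.mulVecLin ⊔ LinearMap.range B.mulVecLin := by
    rintro x ⟨v, rfl⟩
    refine Submodule.mem_sup.mpr ⟨A.mulVecLin v, ⟨v, rfl⟩, B.mulVecLin v, ⟨v, rfl⟩, ?_⟩
    simp [Matrix.mulVecLin_apply, Matrix.add_mulVec]
  calc (A + B).rank ≤ Module.finrank F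
        ↥(LinearMap.range A.mulVecLin ⊔ LinearMap.range B.mulVecLin) :=
      Submodule.finrank_mono hle
    _ ≤ A.rank + B.rank :=
      Submodule.finrank_add_le_finrank_add_finrank _ _

lemma myRankSumLe {ι : Type*} (s : Finset ι)
    (f : ι → Matrix (Fin d → Fin n) (Fin d → Fin n) F) :
    (∑ x ∈ s, f x).rank ≤ ∑ x ∈ s, (f x).rank := by
  classical
  induction s using Finset.induction_on with
  | empty => simp [Matrix.rank_zero]
  | insert _ _ h ih =>
      rw [Finset.sum_insert h, Finset.sum_insert h]
      exact (myRankAddLe _ _).trans (by omega)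

variable (κ : Finset (Fin d))

/-- write the values of `b` onto the coordinates in `κ`. -/
def wr (b : ↥κ → Fin n) (i : Fin d → Fin n) : Fin d → Fin n :=
  fun k => if h : k ∈ κ then b ⟨k, h⟩ else i k

/-- restriction of an index to `κ`. -/
def restr (i : Fin d → Fin n) : ↥κ → Fin n := fun k => i k

def matA (a b : ↥κ → Fin n) : Matrix (Fin d → Fin n) (Fin d → Fin n) F :=
  fun i i' => (if restr κ i = a then 1 else 0) * (if i' = wr κ b i then 1 else 0)

def matB (a b : ↥κ → Fin n) : Matrix (Fin d → Fin n) (Fin d → Fin n) F :=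
  fun j' j => (if j' = wr κ a j then 1 else 0) * (if restr κ j = b then 1 else 0)

lemma ABentry (M : Matrix (Fin d → Fin n) (Fin d → Fin n) F) (a b : ↥κ → Fin n)
    (i j : Fin d → Fin n) :
    (matA (F := F) κ a b * M * matB (F := F) κ a b) i j
      = if restr κ i = a ∧ restr κ j = b then M (wr κ b i) (wr κ a j) else 0 := by
  classical
  simp only [Matrix.mul_apply, matA, matB, ite_mul, mul_ite, one_mul, mul_one, zero_mul,
    mul_zero, ite_and]
  simp [Finset.sum_ite_eq, Finset.sum_ite_eq']
  split <;> split <;> simp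

lemma decomp (M : Matrix (Fin d → Fin n) (Fin d → Fin n) F) :
    ptrans κ M = ∑ p : (↥κ → Fin n) × (↥κ → Fin n), matA (F := F) κ p.1 p.2 * M * matB (F := F) κ p.1 p.2 := by
  classical
  funext i j
  rw [Matrix.sum_apply]
  simp only [ABentry]
  rw [Finset.sum_eq_single (restr κ i, restr κ j)]
  · simp only [and_self, if_true]
    show M _ _ = M _ _
    congr 1
  · rintro ⟨a, b⟩ - hne
    rw [if_neg]
    rintro ⟨rfl, rfl⟩
    exact hne rfl
  · intro h; exact absurd (Finset.mem_univ _) h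

lemma key (M : Matrix (Fin d → Fin n) (Fin d → Fin n) F) :
    (ptrans κ M).rank ≤ n ^ (2 * κ.card) * M.rank := by
  classical
  rw [decomp κ M]
  calc (∑ p : (↥κ → Fin n) × (↥κ → Fin n), matA (F := F) κ p.1 p.2 * M * matB (F := F) κ p.1 p.2).rank
      ≤ ∑ p : (↥κ → Fin n) × (↥κ → Fin n), (matA (F := F) κ p.1 p.2 * M * matB (F := F) κ p.1 p.2).rank :=
        myRankSumLe _ _
    _ ≤ ∑ _p : (↥κ → Fin n) × (↥κ → Fin n), M.rank := by
        refine Finset.sum_le_sum fun p _ => ?_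
        exact (Matrix.rank_mul_le _ _).trans
          (le_trans inf_le_left ((Matrix.rank_mul_le _ _).trans inf_le_right))
    _ = n ^ (2 * κ.card) * M.rank := by
        rw [Finset.sum_const, Finset.card_univ, Fintype.card_prod, Fintype.card_fun,
          Fintype.card_coe, Fintype.card_fin, smul_eq_mul, two_mul, pow_add]

lemma ptrans_compl (M : Matrix (Fin d → Fin n) (Fin d → Fin n) F) :
    ptrans κᶜ M = (ptrans κ M)ᵀ := by
  funext i j
  show M _ _ = M _ _
  congr 1 <;> funext k <;> simp only [Finset.mem_compl] <;> split <;>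
    simp_all

end aux

/-- `rank(M^{⊤_κ}) ≤ n^{2·min{|κ|, d−|κ|}} · rank(M)`. -/
theorem stmt3 {F : Type*} [Field F] {n d : ℕ}
    (M : Matrix (Fin d → Fin n) (Fin d → Fin n) F) (κ : Finset (Fin d)) :
    (ptrans κ M).rank ≤ n ^ (2 * min κ.card (d - κ.card)) * M.rank := by
  rcases min_cases κ.card (d - κ.card) with ⟨h, _⟩ | ⟨h, _⟩ <;> rw [h]
  · exact key κ M
  · have h2 : (ptrans κ M).rank = (ptrans κᶜ M).rank := by
      rw [ptrans_compl, Matrix.rank_transpose]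
    have h3 : κᶜ.card = d - κ.card := by
      rw [Finset.card_compl, Fintype.card_fin]
    rw [h2, ← h3]
    exact key κᶜ M
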